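/- Let θ be a type with a transitive, well-founded relation ◁ such that every nonempty subset of θ arising from a chain has a ◁-minimal element, and let ⊕, ≻ and the lexicographic order < be as defined. Then for any predicate Q on finite sequences over θ: if there exists x : ℕ → θ with ∀ d, Q(⟨x(0),…,x(d−1)⟩), then there exists y : ℕ → θ with ∀ d, Q(⟨y(0),…,y(d−1)⟩) and such that for all n and z : ℕ → θ with z(n) ◁ y(n), there exists d with ¬Q(⟨(⟨y(0),…,y(n−1)⟩ @ z)(0),…,(⟨y(0),…,y(n−1)⟩ @ z)(d−1)⟩). -/

import Mathlib

section Aux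

variable {θ : Type*} (lt : θ → θ → Prop) (Q : List θ → Prop)

/-- A sequence all of whose prefixes satisfy `Q`. -/
def LexGood (z : ℕ → θ) : Prop := ∀ d : ℕ, Q ((List.range d).map z)

/-- Possible values at position `n` of good sequences agreeing with `w` below `n`. -/
def LexSet (w : ℕ → θ) (n : ℕ) : Set θ :=
  {a | ∃ z : ℕ → θ, LexGood Q z ∧ (∀ i < n, z i = w i) ∧ z n = a}

variable (hwf : WellFounded lt)

lemma lexSet_nonempty {w : ℕ → θ} (hw : LexGood Q w) (n : ℕ) :
    (LexSet Q w n).Nonempty :=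
  ⟨w n, w, hw, fun _ _ => rfl, rfl⟩

/-- Iterative construction of good sequences, minimizing one position at a time. -/
noncomputable def LexF (x0 : ℕ → θ) (h0 : LexGood Q x0) :
    ℕ → {w : ℕ → θ // LexGood Q w}
  | 0 => ⟨x0, h0⟩
  | n + 1 =>
    let w := LexF x0 h0 n
    let hmem := WellFounded.min_mem hwf (LexSet Q w.1 n)
        (lexSet_nonempty Q w.2 n)
    ⟨Classical.choose hmem, (Classical.choose_spec hmem).1⟩

lemma LexF_agree (x0 : ℕ → θ) (h0 : LexGood Q x0) (n : ℕ) :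
    ∀ i < n, (LexF lt Q hwf x0 h0 (n + 1)).1 i = (LexF lt Q hwf x0 h0 n).1 i := by
  intro i hi
  exact (Classical.choose_spec (WellFounded.min_mem hwf
    (LexSet Q (LexF lt Q hwf x0 h0 n).1 n)
    (lexSet_nonempty Q (LexF lt Q hwf x0 h0 n).2 n))).2.1 i hi

lemma LexF_min (x0 : ℕ → θ) (h0 : LexGood Q x0) (n : ℕ) :
    (LexF lt Q hwf x0 h0 (n + 1)).1 n =
      WellFounded.min hwf (LexSet Q (LexF lt Q hwf x0 h0 n).1 n)
        (lexSet_nonempty Q (LexF lt Q hwf x0 h0 n).2 n) :=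
  (Classical.choose_spec (WellFounded.min_mem hwf
    (LexSet Q (LexF lt Q hwf x0 h0 n).1 n)
    (lexSet_nonempty Q (LexF lt Q hwf x0 h0 n).2 n))).2.2

end Aux

/-- The principle `LEX_◁` : Zorn's lemma / open induction for the lexicographic
ordering on sequences. -/
theorem lex_zorn {θ : Type*} (lt : θ → θ → Prop)
    (hwf : WellFounded lt) (htrans : Transitive lt)
    (htri : ∀ a b : θ, lt a b ∨ a = b ∨ lt b a)
    (Q : List θ → Prop)
    (hex : ∃ x : ℕ → θ, ∀ d : ℕ, Q ((List.range d).map x)) :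
    ∃ y : ℕ → θ, (∀ d : ℕ, Q ((List.range d).map y)) ∧
      ∀ (n : ℕ) (z : ℕ → θ), lt (z n) (y n) →
        ∃ d : ℕ, ¬ Q ((List.range d).map (fun i => if i < n then y i else z i)) := by
  obtain ⟨x0, h0⟩ := hex
  set F := LexF lt Q hwf x0 h0 with hF
  set y : ℕ → θ := fun n => (F (n + 1)).1 n with hy
  -- For i < n, (F n).1 i = y i
  have hagree : ∀ n, ∀ i < n, (F n).1 i = y i := by
    intro n
    induction n with
    | zero => intro i hi; omega
    | succ n ih =>
      intro i hi
      rcases Nat.lt_succ_iff_lt_or_eq.mp hi with h | h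
      · rw [LexF_agree lt Q hwf x0 h0 n i h]; exact ih i h
      · subst h; rfl
  have hgood : ∀ d : ℕ, Q ((List.range d).map y) := by
    intro d
    have := (F d).2 d
    have heq : (List.range d).map (F d).1 = (List.range d).map y := by
      apply List.map_congr_left
      intro i hi
      exact hagree d i (List.mem_range.mp hi)
    rwa [heq] at this
  refine ⟨y, hgood, ?_⟩
  intro n z hlt
  by_contra hcon
  push_neg at hcon
  -- the modified sequence is good, so z n ∈ LexSet Q (F n).1 n
  have hmem : z n ∈ LexSet Q (F n).1 n := by
    refine ⟨fun i => if i < n then y i else z i, hcon, ?_, ?_⟩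
    · intro i hi; simp [hi, hagree n i hi]
    · simp
  have hymin : y n = WellFounded.min hwf (LexSet Q (F n).1 n)
      (lexSet_nonempty Q (F n).2 n) := LexF_min lt Q hwf x0 h0 n
  exact WellFounded.not_lt_min hwf _ hmem (hymin ▸ hlt)
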